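/- There exists a constant C > 0 such that the following holds. Let G be a finite abelian group, ε > 0, d ≥ 0, f : G → ℝ_{≥0} with E[f] > 0, {A_g}_{g∈G} a collection of subsets of G with Σ_{g∈G} |A_g| ≥ 2^{−d} |G|², and D : G → ℝ_{≥0} given by D(x) = |A_x|. Then either (1) |⟨μ_f, μ_D⟩ − 1| ≤ ε, or (2) there exists an integer p with 1 ≤ p ≤ C(d+1) such that ‖μ_f − 1‖_p ≥ ε/2. -/
import Mathlib


open scoped BigOperators Classical

noncomputable section

namespace SkewPaper

variable {G : Type*}

/-- Expectation (average) of `f` over a finite type: `E[f] = (1/|G|) ∑ x, f x`. -/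
def expect [Fintype G] (f : G → ℝ) : ℝ := (∑ x, f x) / (Fintype.card G)

/-- Normalized inner product `⟨f, g⟩ = E_{x∈G} f(x) g(x)`. -/
def inprod [Fintype G] (f g : G → ℝ) : ℝ := expect (fun x => f x * g x)

/-- Convolution `(f ∗ g)(x) = E_{y∈G} f(y) g(x − y)`. -/
def conv [Fintype G] [AddCommGroup G] (f g : G → ℝ) : G → ℝ :=
  fun x => expect (fun y => f y * g (x - y))

/-- Difference convolution `(f ∘ g)(x) = E_{y∈G} f(y) g(x + y)`. -/
def dconv [Fintype G] [AddCommGroup G] (f g : G → ℝ) : G → ℝ :=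
  fun x => expect (fun y => f y * g (x + y))

/-- Indicator function `1_A` of a set `A`. -/
def ind (A : Set G) : G → ℝ := Set.indicator A (fun _ => (1 : ℝ))

/-- Normalized indicator `μ_A = (|G|/|A|) · 1_A`. -/
def muSet [Fintype G] (A : Set G) : G → ℝ :=
  fun x => ((Fintype.card G : ℝ) / (Nat.card A : ℝ)) * ind A x

/-- `μ_f = f / E[f]`, the normalization of `f` to have mean 1. -/
def muFun [Fintype G] (f : G → ℝ) : G → ℝ := fun x => f x / expect f

/-- Weighted `L^p` norm `‖f‖_{p(ν)} = (E_x ν(x) |f(x)|^p)^{1/p}`. -/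
def wnorm [Fintype G] (p : ℕ) (ν f : G → ℝ) : ℝ :=
  (expect (fun x => ν x * |f x| ^ p)) ^ ((p : ℝ)⁻¹)

/-- `L^p` norm with respect to the uniform measure. -/
def pnorm [Fintype G] (p : ℕ) (f : G → ℝ) : ℝ := wnorm p (fun _ => 1) f

/-- Sup norm `‖f‖_∞`. -/
def supNorm (f : G → ℝ) : ℝ := ⨆ x, |f x|

/-- `A` is skew-corner-free: it contains no nontrivial skew corner
`(x,y), (x,y+h), (x+h,y')` with `h ≠ 0`. -/
def IsSkewCornerFree [AddCommGroup G] (A : Set (G × G)) : Prop :=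
  ∀ x y y' h : G, (x, y) ∈ A → (x, y + h) ∈ A → (x + h, y') ∈ A → h = 0

/-- The set of quadruples `(x, y, y', h)` forming a skew corner of `A`. -/
def skewCorners [AddCommGroup G] (A : Set (G × G)) : Set (G × G × G × G) :=
  {q | (q.1, q.2.1) ∈ A ∧ (q.1, q.2.1 + q.2.2.2) ∈ A ∧ (q.1 + q.2.2.2, q.2.2.1) ∈ A}

/-- The column `A_x = {y : (x,y) ∈ A}`. -/
def col (A : Set (G × G)) (x : G) : Set G := {y | (x, y) ∈ A}

/-- A Bohr set datum: a finite frequency set of characters together with a width. -/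
structure BohrSet (G : Type*) [AddCommGroup G] where
  freq : Finset (AddChar G ℂ)
  width : ℝ

namespace BohrSet

variable [AddCommGroup G]

/-- The underlying set `Bohr(Γ, φ) = {x : |1 − γ(x)| ≤ φ for all γ ∈ Γ}`. -/
def toSet (B : BohrSet G) : Set G :=
  {x | ∀ γ ∈ B.freq, ‖(1 : ℂ) - γ x‖ ≤ B.width}

/-- The rank `|Γ|` of a Bohr set. -/
def rank (B : BohrSet G) : ℕ := B.freq.card

/-- The dilate `B_ρ = Bohr(Γ, ρφ)`. -/
def dilate (B : BohrSet G) (ρ : ℝ) : BohrSet G := ⟨B.freq, ρ * B.width⟩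

/-- `B'` is a sub-Bohr set of `B` (written `B' ≤ B`): its frequency set contains
that of `B` and its width is at most that of `B`. -/
def Sub (B' B : BohrSet G) : Prop := B.freq ⊆ B'.freq ∧ B'.width ≤ B.width

/-- A Bohr set of rank `r` is regular if for all `0 ≤ κ ≤ 1/(100r)`,
`|B_{1+κ}| ≤ (1+100κr)|B|` and `|B_{1−κ}| ≥ (1−100κr)|B|`. -/
def IsRegular (B : BohrSet G) : Prop :=
  ∀ κ : ℝ, 0 ≤ κ → κ ≤ 1 / (100 * B.rank) →
    ((Nat.card (B.dilate (1 + κ)).toSet : ℝ) ≤ (1 + 100 * κ * B.rank) * (Nat.card B.toSet : ℝ) ∧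
     (Nat.card (B.dilate (1 - κ)).toSet : ℝ) ≥ (1 - 100 * κ * B.rank) * (Nat.card B.toSet : ℝ))

/-- The density `μ(B) = |B|/|G|`. -/
def measure [Fintype G] (B : BohrSet G) : ℝ := (Nat.card B.toSet : ℝ) / (Fintype.card G : ℝ)

/-- The normalized indicator measure `μ_B`. -/
def mu [Fintype G] (B : BohrSet G) : G → ℝ := muSet B.toSet

end BohrSet


/-- (r, λ)-simultaneously spread collection of subsets of 𝔽_q^n. -/
def SimSpread {F : Type*} [Field F] [Fintype F] {n : ℕ} {ι : Type*} [Fintype ι]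
    (A : ι → Set (Fin n → F)) (r : ℕ) (lam : ℝ) : Prop :=
  ∀ V : Submodule F (Fin n → F), n ≤ Module.finrank F V + r →
    ∀ x : ι → Fin n → F,
      ∑ i, ((Nat.card ↥(((fun a => a - x i) '' A i) ∩ (V : Set (Fin n → F))) : ℝ) /
            (Nat.card (V : Set (Fin n → F)) : ℝ)) ^ 2 ≤
        lam * ∑ i, ((Nat.card (A i) : ℝ) / ((Fintype.card F : ℝ) ^ n)) ^ 2

/-- (r, λ)-simultaneously spread in an ambient subspace `W`. -/
def SimSpreadIn {F : Type*} [Field F] [Fintype F] {n : ℕ} {ι : Type*} [Fintype ι]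
    (W : Submodule F (Fin n → F)) (A : ι → Set (Fin n → F)) (r : ℕ) (lam : ℝ) : Prop :=
  ∀ V : Submodule F (Fin n → F), V ≤ W → Module.finrank F W ≤ Module.finrank F V + r →
    ∀ x : ι → Fin n → F, (∀ i, x i ∈ W) →
      ∑ i, ((Nat.card ↥(((fun a => a - x i) '' A i) ∩ (V : Set (Fin n → F))) : ℝ) /
            (Nat.card (V : Set (Fin n → F)) : ℝ)) ^ 2 ≤
        lam * ∑ i, ((Nat.card (A i) : ℝ) / (Nat.card (W : Set (Fin n → F)) : ℝ)) ^ 2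

/-- (r, δ, λ)-simultaneously spread collection of subsets of a regular Bohr set `B`. -/
def SimSpreadBohr {G : Type*} [AddCommGroup G] [Fintype G] {ι : Type*} [Fintype ι]
    (B : BohrSet G) (A : ι → Set G) (r : ℕ) (δ lam : ℝ) : Prop :=
  ∀ B' : BohrSet G, B'.Sub B → B'.IsRegular → B'.rank ≤ B.rank + r →
    δ * B.measure ≤ B'.measure →
    ∀ x : ι → G,
      ∑ i, ((Nat.card ↥(((fun a => a - x i) '' A i) ∩ B'.toSet) : ℝ) /
            (Nat.card B'.toSet : ℝ)) ^ 2 ≤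
        lam * ∑ i, ((Nat.card (A i) : ℝ) / (Nat.card B.toSet : ℝ)) ^ 2

theorem statement10 :
    ∃ C : ℝ, 0 < C ∧ ∀ (G : Type) [AddCommGroup G] [Fintype G],
      ∀ ε : ℝ, 0 < ε → ∀ d : ℝ, 0 ≤ d →
      ∀ f : G → ℝ, (∀ x, 0 ≤ f x) → 0 < expect f →
      ∀ A : G → Set G,
        (2 : ℝ) ^ (-d) * (Fintype.card G : ℝ) ^ 2 ≤ ∑ g, (Nat.card (A g) : ℝ) →
      ∀ D : G → ℝ, D = (fun x => (Nat.card (A x) : ℝ)) →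
        |inprod (muFun f) (muFun D) - 1| ≤ ε ∨
        ∃ p : ℕ, 1 ≤ p ∧ (p : ℝ) ≤ C * (d + 1) ∧ ε / 2 ≤ pnorm p (fun x => muFun f x - 1) := by
  refine ⟨2, by norm_num, ?_⟩
  intro G _ _ ε hε d hd f hf hEf A hA D hD
  set p : ℕ := ⌈d⌉₊ + 1 with hpdef
  have hdp : d ≤ (p : ℝ) := by
    have := Nat.le_ceil d
    push_cast [hpdef]
    linarith
  have hp1 : (1 : ℝ) ≤ (p : ℝ) := by exact_mod_cast Nat.one_le_iff_ne_zero.2 (by simp [hpdef])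
  by_cases hcase : ε / 2 ≤ pnorm p (fun x => muFun f x - 1)
  · refine Or.inr ⟨p, Nat.le_add_left 1 _, ?_, hcase⟩
    have h1 : (⌈d⌉₊ : ℝ) ≤ d + 1 := (Nat.ceil_lt_add_one hd).le
    push_cast [hpdef]
    linarith
  left
  -- basic facts
  have hn : (0 : ℝ) < (Fintype.card G : ℝ) := by
    exact_mod_cast Fintype.card_pos_iff.mpr ⟨(0 : G)⟩
  have hD0 : ∀ x, 0 ≤ D x := by intro x; rw [hD]; positivity
  have h2d : (0 : ℝ) < (2 : ℝ) ^ (-d) := Real.rpow_pos_of_pos (by norm_num) _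
  have hsum : (2 : ℝ) ^ (-d) * (Fintype.card G : ℝ) ^ 2 ≤ ∑ g, D g := by
    rw [hD]; exact hA
  have hED : (2 : ℝ) ^ (-d) * (Fintype.card G : ℝ) ≤ expect D := by
    rw [expect, le_div_iff₀ hn]
    calc (2:ℝ) ^ (-d) * (Fintype.card G : ℝ) * (Fintype.card G : ℝ)
        = (2:ℝ) ^ (-d) * (Fintype.card G : ℝ) ^ 2 := by ring
      _ ≤ _ := hsum
  have hEDpos : 0 < expect D := lt_of_lt_of_le (by positivity) hED
  have hmuD0 : ∀ x, 0 ≤ muFun D x := fun x => div_nonneg (hD0 x) hEDpos.le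
  -- μ_D ≤ 2^d pointwise
  have hDle : ∀ x, D x ≤ (Fintype.card G : ℝ) := by
    intro x
    rw [hD]
    have h1 : Nat.card (A x) ≤ Fintype.card G := by
      rw [← Nat.card_eq_fintype_card (α := G), Nat.card_coe_set_eq, ← Set.ncard_univ]
      exact Set.ncard_le_ncard (Set.subset_univ _) Set.finite_univ
    show ((Nat.card (A x) : ℕ) : ℝ) ≤ (Fintype.card G : ℝ)
    exact_mod_cast h1
  have hmuDle : ∀ x, muFun D x ≤ (2 : ℝ) ^ d := by
    intro x
    rw [muFun]
    rw [div_le_iff₀ hEDpos]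
    calc D x ≤ (Fintype.card G : ℝ) := hDle x
      _ = (2:ℝ) ^ d * ((2:ℝ) ^ (-d) * (Fintype.card G : ℝ)) := by
          rw [← mul_assoc, ← Real.rpow_add (by norm_num : (0:ℝ) < 2)]
          simp
      _ ≤ (2:ℝ) ^ d * expect D := by
          have : (0:ℝ) < (2:ℝ)^d := Real.rpow_pos_of_pos (by norm_num) _
          nlinarith [hED]
  -- helper lemmas about expect
  have hexpect_div : ∀ (g : G → ℝ) (c : ℝ), expect (fun x => g x / c) = expect g / c := by
    intro g c
    unfold expect
    rw [← Finset.sum_div, div_right_comm]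
  have hexpect_sub : ∀ (a b : G → ℝ), expect (fun x => a x - b x) = expect a - expect b := by
    intro a b; unfold expect; rw [Finset.sum_sub_distrib, sub_div]
  have hexpect_le : ∀ a b : G → ℝ, (∀ x, a x ≤ b x) → expect a ≤ expect b := by
    intro a b h
    unfold expect
    gcongr with i
    · exact h i
  have hexpect_const_mul : ∀ (c : ℝ) (a : G → ℝ), expect (fun x => c * a x) = c * expect a := by
    intro c a; unfold expect; rw [← Finset.mul_sum, mul_div_assoc]
  have hexpect_nonneg : ∀ a : G → ℝ, (∀ x, 0 ≤ a x) → 0 ≤ expect a := by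
    intro a h
    unfold expect
    exact div_nonneg (Finset.sum_nonneg fun i _ => h i) hn.le
  have hEE : ∀ (g : G → ℝ), (Finset.univ.expect g) = expect g := by
    intro g; rw [Finset.expect_eq_sum_div_card, Finset.card_univ]; rfl
  -- mean of μ_D is 1
  have hmuD1 : expect (muFun D) = 1 := by
    unfold muFun
    rw [hexpect_div]
    exact div_self hEDpos.ne'
  set g : G → ℝ := fun x => muFun f x - 1 with hg
  -- Step A
  have hkey : inprod (muFun f) (muFun D) - 1 = expect (fun x => g x * muFun D x) := by
    have h1 : (fun x => g x * muFun D x)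
        = fun x => muFun f x * muFun D x - muFun D x := by
      funext x; rw [hg]; ring
    rw [h1, hexpect_sub, hmuD1, inprod]
  -- Step B
  have habs : |expect (fun x => g x * muFun D x)|
      ≤ expect (fun x => muFun D x * |g x|) := by
    unfold expect
    rw [abs_div, abs_of_nonneg hn.le]
    gcongr
    refine (Finset.abs_sum_le_sum_abs _ _).trans ?_
    apply Finset.sum_le_sum
    intro i _
    rw [abs_mul, abs_of_nonneg (hmuD0 i), mul_comm]
  -- Step C : Hölder
  have hhold : expect (fun x => muFun D x * |g x|)
      ≤ (expect (fun x => muFun D x * |g x| ^ (p : ℝ))) ^ (p : ℝ)⁻¹ := by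
    have h := Real.compact_inner_le_weight_mul_Lp_of_nonneg (ι := G) Finset.univ hp1
      (w := muFun D) (f := fun x => |g x|) hmuD0 (fun x => abs_nonneg _)
    simp only [hEE] at h
    rw [hmuD1, Real.one_rpow, one_mul] at h
    exact h
  -- Step D : bound the weight by 2^d
  have hX : 0 ≤ expect (fun x => |g x| ^ p) :=
    hexpect_nonneg _ (fun x => by positivity)
  have hDbound : expect (fun x => muFun D x * |g x| ^ (p : ℝ))
      ≤ (2 : ℝ) ^ d * expect (fun x => |g x| ^ p) := by
    rw [← hexpect_const_mul]
    apply hexpect_le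
    intro x
    rw [Real.rpow_natCast]
    have h1 : (0:ℝ) ≤ |g x| ^ p := by positivity
    exact mul_le_mul_of_nonneg_right (hmuDle x) h1
  -- Step E : combine
  have h2dpos : (0:ℝ) < (2:ℝ) ^ d := Real.rpow_pos_of_pos (by norm_num) _
  have hpn : pnorm p g = (expect (fun x => |g x| ^ p)) ^ (p : ℝ)⁻¹ := by
    unfold pnorm wnorm
    simp only [one_mul]
  have hchain : (expect (fun x => muFun D x * |g x| ^ (p : ℝ))) ^ (p : ℝ)⁻¹
      ≤ 2 * pnorm p g := by
    calc (expect (fun x => muFun D x * |g x| ^ (p : ℝ))) ^ (p : ℝ)⁻¹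
        ≤ ((2:ℝ) ^ d * expect (fun x => |g x| ^ p)) ^ (p : ℝ)⁻¹ := by
          apply Real.rpow_le_rpow _ hDbound (by positivity)
          exact hexpect_nonneg _ (fun x => mul_nonneg (hmuD0 x) (by positivity))
      _ = ((2:ℝ) ^ d) ^ (p : ℝ)⁻¹ * (expect (fun x => |g x| ^ p)) ^ (p : ℝ)⁻¹ :=
          Real.mul_rpow h2dpos.le hX
      _ ≤ 2 * pnorm p g := by
          rw [hpn]
          apply mul_le_mul_of_nonneg_right _ (by positivity)
          rw [← Real.rpow_mul (by norm_num : (0:ℝ) ≤ 2)]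
          calc (2:ℝ) ^ (d * (p:ℝ)⁻¹) ≤ (2:ℝ) ^ (1:ℝ) := by
                apply Real.rpow_le_rpow_of_exponent_le (by norm_num)
                have hppos : (0:ℝ) < (p:ℝ) := lt_of_lt_of_le one_pos hp1
                rw [← div_eq_mul_inv, div_le_one hppos]
                exact hdp
            _ = 2 := Real.rpow_one 2
  push_neg at hcase
  have hfinal : |inprod (muFun f) (muFun D) - 1| ≤ 2 * pnorm p g :=
    hkey ▸ (habs.trans (hhold.trans hchain))
  have : 2 * pnorm p g ≤ ε := by linarith
  linarith [hfinal]

end SkewPaper
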